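/- Let E be a complex inner product space, ψ, ψ' unit vectors in E with φ := ⟪ψ, ψ'⟫ ≠ 0, and let W : E → E be a linear isometry such that W ψ = exp(iθ) • ψ and W ψ' = exp(iθ') • ψ' for real numbers θ, θ'. Then exp(iθ) = exp(iθ'), and for every α ∈ [0,1] the path state satisfies W (Ψ(α)) = exp(iθ) • Ψ(α); consequently the Hamiltonian H(α) x := -(⟪Ψ(α), x⟫ • Ψ(α)) commutes with W: W(H(α) x) = H(α)(W x) for all x ∈ E. (The adiabatic path preserves every symmetry of the two states.) -/

import Mathlib

open scoped InnerProductSpace ComplexConjugate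

/-- The adiabatic path preserves every symmetry of the two states: if a linear isometry `W`
leaves `ψ` and `ψ'` invariant up to `U(1)` phases `exp(iθ)`, `exp(iθ')`, and the overlap
`⟪ψ, ψ'⟫` is nonzero, then the two phases coincide, the path state `Ψ(α)` is invariant up to
the phase `exp(iθ)`, and the Hamiltonian `H(α) x := -(⟪Ψ(α), x⟫ • Ψ(α))` commutes with `W`. -/
theorem path_state_symmetry {E : Type*} [NormedAddCommGroup E]
    [InnerProductSpace ℂ E] (ψ ψ' : E) (hψ : ‖ψ‖ = 1) (hψ' : ‖ψ'‖ = 1)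
    (hφ : ⟪ψ, ψ'⟫_ℂ ≠ 0) (W : E →ₗᵢ[ℂ] E) (θ θ' : ℝ)
    (hWψ : W ψ = Complex.exp ((θ : ℂ) * Complex.I) • ψ)
    (hWψ' : W ψ' = Complex.exp ((θ' : ℂ) * Complex.I) • ψ')
    (Ψ : ℝ → E)
    (hΨ : ∀ α : ℝ, Ψ α =
      (Real.sqrt ((1 - α) ^ 2 + α * (2 - α) * ‖⟪ψ, ψ'⟫_ℂ‖ ^ 2))⁻¹ •
        (((1 - α : ℝ) : ℂ) • ψ + ((α : ℂ) * conj ⟪ψ, ψ'⟫_ℂ) • ψ')) :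
    Complex.exp ((θ : ℂ) * Complex.I) = Complex.exp ((θ' : ℂ) * Complex.I) ∧
    ∀ α ∈ Set.Icc (0 : ℝ) 1,
      W (Ψ α) = Complex.exp ((θ : ℂ) * Complex.I) • Ψ α ∧
      ∀ x : E, W (-(⟪Ψ α, x⟫_ℂ • Ψ α)) = -(⟪Ψ α, W x⟫_ℂ • Ψ α) := by
  set e := Complex.exp ((θ : ℂ) * Complex.I) with he
  set e' := Complex.exp ((θ' : ℂ) * Complex.I) with he'
  have hconj : conj e = Complex.exp (-((θ : ℂ) * Complex.I)) := by
    rw [he, ← Complex.exp_conj, map_mul, Complex.conj_ofReal, Complex.conj_I,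
      mul_neg]
  have hce : conj e * e = 1 := by
    rw [hconj, he, ← Complex.exp_add, neg_add_cancel, Complex.exp_zero]
  have hphase : e = e' := by
    have h1 : ⟪W ψ, W ψ'⟫_ℂ = ⟪ψ, ψ'⟫_ℂ := W.inner_map_map ψ ψ'
    rw [hWψ, hWψ', inner_smul_left, inner_smul_right] at h1
    have h2 : conj e * e' = 1 :=
      mul_right_cancel₀ hφ (by rw [one_mul]; linear_combination h1)
    have hne : conj e ≠ 0 := by rw [hconj]; exact Complex.exp_ne_zero _
    exact mul_left_cancel₀ hne (hce.trans h2.symm)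
  refine ⟨hphase, fun α _ => ?_⟩
  have hWΨ : W (Ψ α) = e • Ψ α := by
    rw [hΨ α, ← Complex.coe_smul, map_smul, map_add, map_smul, map_smul, hWψ, hWψ',
      ← hphase]
    module
  refine ⟨hWΨ, fun x => ?_⟩
  have hinner : ⟪Ψ α, W x⟫_ℂ = e * ⟪Ψ α, x⟫_ℂ := by
    have : ⟪W (Ψ α), W x⟫_ℂ = ⟪Ψ α, x⟫_ℂ := W.inner_map_map _ _
    rw [hWΨ, inner_smul_left] at this
    calc ⟪Ψ α, W x⟫_ℂ = e * (conj e * ⟪Ψ α, W x⟫_ℂ) := by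
          rw [← mul_assoc, mul_comm e, hce, one_mul]
      _ = e * ⟪Ψ α, x⟫_ℂ := by rw [this]
  rw [map_neg, map_smul, hWΨ, hinner, smul_smul, mul_comm]
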